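/- (Muckenhoupt two-weight Hardy inequality.) Let μ and ν be locally finite positive Borel measures on (0,∞). If A := sup_{0<r<∞} ν([r,∞)) · μ((0,r]) < ∞, then for every nonnegative measurable f on (0,∞), ∫₀^∞ ( ∫_{(0,t]} f dμ )² dν(t) ≤ C·A·∫₀^∞ f² dμ, where C is an absolute constant. -/

import Mathlib

open MeasureTheory Set
open scoped ENNReal

noncomputable def esqrt (x : ℝ≥0∞) : ℝ≥0∞ := x ^ (1/2 : ℝ)

lemma rpow_half_mul_self (x : ℝ≥0∞) : x ^ (1/2:ℝ) * x ^ (1/2:ℝ) = x := by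
  rcases eq_or_ne x 0 with rfl | h0
  · rw [ENNReal.zero_rpow_of_pos (by norm_num), mul_zero]
  rcases eq_or_ne x ⊤ with rfl | ht
  · rw [ENNReal.top_rpow_of_pos (by norm_num)]; simp
  · rw [← ENNReal.rpow_add _ _ h0 ht]; norm_num

lemma esqrt_mul_self (x : ℝ≥0∞) : esqrt x * esqrt x = x := rpow_half_mul_self x

lemma esqrt_mono {x y : ℝ≥0∞} (h : x ≤ y) : esqrt x ≤ esqrt y :=
  ENNReal.rpow_le_rpow h (by norm_num)

lemma esqrt_ne_top {x : ℝ≥0∞} (h : x ≠ ⊤) : esqrt x ≠ ⊤ :=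
  ENNReal.rpow_ne_top_of_nonneg (by norm_num) h

lemma esqrt_ne_zero {x : ℝ≥0∞} (h : x ≠ 0) : esqrt x ≠ 0 := by
  intro hc
  rw [esqrt, ENNReal.rpow_eq_zero_iff] at hc
  rcases hc with ⟨h1, _⟩ | ⟨_, h2⟩
  · exact h h1
  · norm_num at h2

lemma esqrt_top : esqrt ⊤ = ⊤ := by
  rw [esqrt, ENNReal.top_rpow_of_pos (by norm_num)]

lemma esqrt_div (x y : ℝ≥0∞) : esqrt (x / y) = esqrt x / esqrt y :=
  ENNReal.div_rpow_of_nonneg _ _ (by norm_num)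

lemma measurable_esqrt : Measurable esqrt := ENNReal.continuous_rpow_const.measurable

/-- Level-set bound for the primitive `s ↦ μ (Ioc 0 s)`. -/
lemma level_Ioc (μ : Measure ℝ) (t₀ : ℝ) (c : ℝ≥0∞) :
    μ {s | s ∈ Ioc (0:ℝ) t₀ ∧ μ (Ioc 0 s) ≤ c} ≤ c := by
  set T := {s | s ∈ Ioc (0:ℝ) t₀ ∧ μ (Ioc 0 s) ≤ c} with hT
  rcases T.eq_empty_or_nonempty with h | h
  · rw [h]; simp
  · have hbdd : BddAbove T := ⟨t₀, fun x hx => hx.1.2⟩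
    by_cases hmem : sSup T ∈ T
    · refine le_trans (measure_mono ?_) hmem.2
      intro x hx
      exact ⟨hx.1.1, le_csSup hbdd hx⟩
    · have hlt : ∀ x ∈ T, x < sSup T := fun x hx =>
        lt_of_le_of_ne (le_csSup hbdd hx) (fun h' => hmem (h' ▸ hx))
      have hseq : ∀ n : ℕ, ∃ x ∈ T, sSup T - 1/(n+1) < x := fun n =>
        exists_lt_of_lt_csSup h (sub_lt_self _ (by positivity))
      choose g hgT hgl using hseq
      have hcover : T ⊆ ⋃ n, Ioc (0:ℝ) (g n) := by
        intro x hx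
        obtain ⟨n, hn⟩ := exists_nat_one_div_lt (sub_pos.mpr (hlt x hx))
        exact mem_iUnion.mpr ⟨n, hx.1.1, le_of_lt (by have := hgl n; linarith)⟩
      have hdir : Directed (fun x1 x2 : Set ℝ => x1 ⊆ x2) (fun n => Ioc (0:ℝ) (g n)) := by
        intro m n
        rcases le_total (g m) (g n) with h' | h'
        · exact ⟨n, Ioc_subset_Ioc_right h', Subset.rfl⟩
        · exact ⟨m, Subset.rfl, Ioc_subset_Ioc_right h'⟩
      calc μ T ≤ μ (⋃ n, Ioc (0:ℝ) (g n)) := measure_mono hcover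
        _ = ⨆ n, μ (Ioc (0:ℝ) (g n)) := hdir.measure_iUnion
        _ ≤ c := iSup_le fun n => (hgT n).2

/-- Level-set bound for the tail `t ↦ ν (Ici t)`. -/
lemma level_Ici (ν : Measure ℝ) (S : Set ℝ) (hB : BddBelow S) (c : ℝ≥0∞) :
    ν {t | t ∈ S ∧ ν (Ici t) ≤ c} ≤ c := by
  set T := {t | t ∈ S ∧ ν (Ici t) ≤ c} with hT
  rcases T.eq_empty_or_nonempty with h | h
  · rw [h]; simp
  · have hbdd : BddBelow T := hB.mono (fun x hx => hx.1)
    by_cases hmem : sInf T ∈ T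
    · refine le_trans (measure_mono ?_) hmem.2
      intro x hx
      exact csInf_le hbdd hx
    · have hlt : ∀ x ∈ T, sInf T < x := fun x hx =>
        lt_of_le_of_ne (csInf_le hbdd hx) (fun h' => hmem (h' ▸ hx))
      have hseq : ∀ n : ℕ, ∃ x ∈ T, x < sInf T + 1/(n+1) := fun n =>
        exists_lt_of_csInf_lt h (lt_add_of_pos_right _ (by positivity))
      choose g hgT hgl using hseq
      have hcover : T ⊆ ⋃ n, Ici (g n) := by
        intro x hx
        obtain ⟨n, hn⟩ := exists_nat_one_div_lt (sub_pos.mpr (hlt x hx))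
        exact mem_iUnion.mpr ⟨n, le_of_lt (show g n < x by have := hgl n; linarith)⟩
      have hdir : Directed (fun x1 x2 : Set ℝ => x1 ⊆ x2) (fun n => Ici (g n)) := by
        intro m n
        rcases le_total (g m) (g n) with h' | h'
        · exact ⟨m, Subset.rfl, Ici_subset_Ici.mpr h'⟩
        · exact ⟨n, Ici_subset_Ici.mpr h', Subset.rfl⟩
      calc ν T ≤ ν (⋃ n, Ici (g n)) := measure_mono hcover
        _ = ⨆ n, ν (Ici (g n)) := hdir.measure_iUnion
        _ ≤ c := iSup_le fun n => (hgT n).2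

/-- The key integral estimate: if the sublevel sets of `g` on `S` have measure bounded by the
level, then `∫ (g)^{-1/2}` over `S` is at most `4 √G` where `G` caps `g` on `S`. -/
lemma key_estimate (m : Measure ℝ) (S : Set ℝ) (g : ℝ → ℝ≥0∞)
    (G : ℝ≥0∞) (hcap : ∀ s ∈ S, g s ≤ G)
    (hlevel : ∀ c : ℝ≥0∞, m {s | s ∈ S ∧ g s ≤ c} ≤ c) :
    ∫⁻ s in S, (esqrt (g s))⁻¹ ∂m ≤ 4 * esqrt G := by
  rcases eq_or_ne G ⊤ with rfl | htop
  · rw [esqrt_top]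
    exact le_top.trans_eq (by simp)
  rcases eq_or_ne G 0 with rfl | h0
  · have hS0 : m S = 0 := by
      have hsub : S ⊆ {s | s ∈ S ∧ g s ≤ 0} := fun s hs => ⟨hs, hcap s hs⟩
      exact le_antisymm ((measure_mono hsub).trans (hlevel 0)) (zero_le)
    rw [setLIntegral_measure_zero _ _ hS0]
    exact zero_le
  · have hγ0 : esqrt G ≠ 0 := esqrt_ne_zero h0
    have hγt : esqrt G ≠ ⊤ := esqrt_ne_top htop
    set γ := esqrt G with hγ
    set E : ℕ → Set ℝ := fun k => {s | s ∈ S ∧ G / 4^(k+1) < g s ∧ g s ≤ G / 4^k} with hE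
    have hNnull : m {s | s ∈ S ∧ g s ≤ 0} = 0 :=
      le_antisymm (hlevel 0) (zero_le)
    have hcover : S ⊆ {s | s ∈ S ∧ g s ≤ 0} ∪ ⋃ k, E k := by
      intro s hs
      rcases eq_or_ne (g s) 0 with hgs | hgs
      · exact Or.inl ⟨hs, le_of_eq hgs⟩
      · right
        have hgt : g s ≠ ⊤ := ne_top_of_le_ne_top htop (hcap s hs)
        have hex : ∃ n : ℕ, G / 4^(n+1) < g s := by
          obtain ⟨n, hn⟩ := ENNReal.exists_nat_gt (ENNReal.div_lt_top htop hgs).ne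
          have h2 : (n:ℝ≥0∞) ≤ 4^(n+1) := by
            calc (n:ℝ≥0∞) ≤ 2^n := by exact_mod_cast (Nat.lt_two_pow_self (n := n)).le
              _ ≤ 4^n := pow_le_pow_left₀ (by norm_num) (by norm_num) n
              _ ≤ 4^(n+1) := pow_le_pow_right₀ (by norm_num) (Nat.le_succ n)
          have hlt : G / g s < 4^(n+1) := hn.trans_le h2
          rw [ENNReal.div_lt_iff (Or.inl hgs) (Or.inl hgt)] at hlt
          refine ⟨n, ?_⟩
          rw [ENNReal.div_lt_iff (Or.inl (by positivity)) (Or.inl (by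
            exact ENNReal.pow_ne_top (by norm_num)))]
          exact hlt.trans_eq (mul_comm _ _)
        have hk1 : G / 4^(Nat.find hex + 1) < g s := Nat.find_spec hex
        have hk2 : g s ≤ G / 4 ^ (Nat.find hex) := by
          rcases Nat.eq_zero_or_pos (Nat.find hex) with hz | hp
          · rw [hz]; simpa using hcap s hs
          · have hmin := Nat.find_min hex (Nat.sub_lt hp one_pos)
            rw [not_lt] at hmin
            have heq : Nat.find hex - 1 + 1 = Nat.find hex := Nat.succ_pred_eq_of_pos hp
            rwa [heq] at hmin
        exact mem_iUnion.mpr ⟨Nat.find hex, ⟨hs, hk1, hk2⟩⟩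
    have hEbound : ∀ k, ∫⁻ s in E k, (esqrt (g s))⁻¹ ∂m ≤ 2 * (2⁻¹)^k * γ := by
      intro k
      have hpt : ∀ s ∈ E k, (esqrt (g s))⁻¹ ≤ 2^(k+1) * γ⁻¹ := by
        intro s hs
        have h2 : esqrt (G / 4^(k+1)) ≤ esqrt (g s) := esqrt_mono (le_of_lt hs.2.1)
        have h3 : esqrt ((4:ℝ≥0∞)^(k+1)) = 2^(k+1) := by
          have h4 : (4:ℝ≥0∞) = 2^2 := by norm_num
          rw [esqrt, h4, ← pow_mul, ← ENNReal.rpow_natCast 2 (2*(k+1)), ← ENNReal.rpow_mul,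
            ← ENNReal.rpow_natCast 2 (k+1)]
          congr 1
          push_cast
          ring
        calc (esqrt (g s))⁻¹ ≤ (esqrt (G / 4^(k+1)))⁻¹ := by
              exact ENNReal.inv_le_inv.mpr h2
          _ = 2^(k+1) * γ⁻¹ := by
              rw [esqrt_div, h3, div_eq_mul_inv,
                ENNReal.mul_inv (Or.inl hγ0) (Or.inl hγt), inv_inv, mul_comm]
      have hmeasE : m (E k) ≤ G / 4^k := by
        refine (measure_mono ?_).trans (hlevel (G / 4^k))
        exact fun s hs => ⟨hs.1, hs.2.2⟩
      have harith : (2:ℝ≥0∞)^(k+1) * γ⁻¹ * (G / 4^k) = 2 * (2⁻¹)^k * γ := by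
        have hG : G = γ * γ := (esqrt_mul_self G).symm
        have hne1 : (2:ℝ≥0∞)^(k+1) * γ⁻¹ * (G / 4^k) ≠ ⊤ := by
          refine ENNReal.mul_ne_top (ENNReal.mul_ne_top (ENNReal.pow_ne_top (by norm_num))
            (ENNReal.inv_ne_top.mpr hγ0)) ?_
          exact (ENNReal.div_lt_top htop (by positivity)).ne
        have hne2 : (2:ℝ≥0∞) * (2⁻¹)^k * γ ≠ ⊤ := by
          refine ENNReal.mul_ne_top (ENNReal.mul_ne_top (by norm_num) ?_) hγt
          exact ENNReal.pow_ne_top (by simp)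
        rw [← ENNReal.toReal_eq_toReal_iff' hne1 hne2, hG]
        have hγr : γ.toReal ≠ 0 := ENNReal.toReal_ne_zero.mpr ⟨hγ0, hγt⟩
        simp only [ENNReal.toReal_mul, ENNReal.toReal_div, ENNReal.toReal_pow,
          ENNReal.toReal_inv, ENNReal.toReal_ofNat]
        have h4 : (4:ℝ)^k ≠ 0 := by positivity
        have h2 : (2:ℝ)^(k+1) ≠ 0 := by positivity
        field_simp
        rw [show (4:ℝ)^k = 2^(k*2) by rw [mul_comm k 2, pow_mul]; norm_num]
        rw [one_div, inv_pow, pow_mul, sq, mul_comm _ ((2:ℝ) ^ k)⁻¹, ← mul_assoc, ← mul_assoc,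
          inv_mul_cancel₀ (by positivity), one_mul, pow_succ]
      calc ∫⁻ s in E k, (esqrt (g s))⁻¹ ∂m
          ≤ ∫⁻ _ in E k, 2^(k+1) * γ⁻¹ ∂m := setLIntegral_mono measurable_const hpt
        _ = 2^(k+1) * γ⁻¹ * m (E k) := by rw [setLIntegral_const]
        _ ≤ 2^(k+1) * γ⁻¹ * (G / 4^k) := mul_le_mul_right hmeasE _
        _ = 2 * (2⁻¹)^k * γ := harith
    calc ∫⁻ s in S, (esqrt (g s))⁻¹ ∂m
        ≤ ∫⁻ s in {s | s ∈ S ∧ g s ≤ 0} ∪ ⋃ k, E k, (esqrt (g s))⁻¹ ∂m :=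
          lintegral_mono_set hcover
      _ ≤ (∫⁻ s in {s | s ∈ S ∧ g s ≤ 0}, (esqrt (g s))⁻¹ ∂m)
            + ∫⁻ s in ⋃ k, E k, (esqrt (g s))⁻¹ ∂m := lintegral_union_le _ _ _
      _ ≤ 0 + ∑' k, ∫⁻ s in E k, (esqrt (g s))⁻¹ ∂m := by
          rw [setLIntegral_measure_zero _ _ hNnull]
          exact add_le_add le_rfl (lintegral_iUnion_le _ _)
      _ ≤ 0 + ∑' k, 2 * (2⁻¹)^k * γ := add_le_add le_rfl (ENNReal.tsum_le_tsum hEbound)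
      _ = 4 * γ := by
          rw [zero_add]
          have hcomm : ∀ k:ℕ, 2 * (2⁻¹:ℝ≥0∞)^k * γ = (2*γ) * (2⁻¹)^k := fun k => by
            rw [mul_right_comm]
          simp_rw [hcomm]
          rw [ENNReal.tsum_mul_left, ENNReal.tsum_geometric, ENNReal.one_sub_inv_two, inv_inv]
          ring

/-- Cauchy–Schwarz step of Muckenhoupt's proof. -/
lemma CS_step (μ : Measure ℝ) [IsLocallyFiniteMeasure μ] (f : ℝ → ℝ≥0∞)
    (hf : Measurable f) (t : ℝ) :
    (∫⁻ s in Ioc (0:ℝ) t, f s ∂μ) ^ 2 ≤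
      (∫⁻ s in Ioc (0:ℝ) t, f s ^ 2 * esqrt (μ (Ioc 0 s)) ∂μ)
        * (4 * esqrt (μ (Ioc 0 t))) := by
  have hWfin : ∀ s:ℝ, μ (Ioc 0 s) ≠ ⊤ := fun s =>
    ((measure_mono Ioc_subset_Icc_self).trans_lt isCompact_Icc.measure_lt_top).ne
  have hWmono : Monotone (fun s:ℝ => μ (Ioc 0 s)) := fun a b hab =>
    measure_mono (Ioc_subset_Ioc_right hab)
  have hWmeas : Measurable (fun s:ℝ => μ (Ioc 0 s)) := hWmono.measurable
  set m := μ.restrict (Ioc (0:ℝ) t) with hm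
  set a : ℝ → ℝ≥0∞ := fun s => f s * (μ (Ioc 0 s)) ^ (1/4:ℝ) with ha
  set b : ℝ → ℝ≥0∞ := fun s => ((μ (Ioc 0 s)) ^ (1/4:ℝ))⁻¹ with hb
  have hameas : Measurable a := hf.mul (ENNReal.continuous_rpow_const.measurable.comp hWmeas)
  have hbmeas : Measurable b := (ENNReal.continuous_rpow_const.measurable.comp hWmeas).inv
  have hae0 : ∀ᵐ s ∂m, μ (Ioc 0 s) ≠ 0 := by
    rw [ae_iff]
    have hle : m {s | ¬ μ (Ioc 0 s) ≠ 0} ≤ μ {s | s ∈ Ioc (0:ℝ) t ∧ μ (Ioc 0 s) ≤ 0} := by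
      rw [hm, Measure.restrict_apply (by
        have : {s : ℝ | ¬ μ (Ioc 0 s) ≠ 0} = (fun s:ℝ => μ (Ioc 0 s)) ⁻¹' {0} := by
          ext x; simp
        rw [this]; exact hWmeas (measurableSet_singleton 0))]
      refine measure_mono fun x hx => ⟨hx.2, ?_⟩
      simp only [mem_setOf_eq, not_not] at hx
      exact le_of_eq hx.1
    exact le_antisymm (hle.trans (level_Ioc μ t 0)) (zero_le)
  have heq : ∫⁻ s in Ioc (0:ℝ) t, f s ∂μ = ∫⁻ s, (a * b) s ∂m := by
    refine lintegral_congr_ae (hae0.mono fun s hs => ?_)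
    have hx0 : (μ (Ioc 0 s)) ^ (1/4:ℝ) ≠ 0 := by
      intro hc
      rw [ENNReal.rpow_eq_zero_iff] at hc
      rcases hc with ⟨h1, _⟩ | ⟨_, h2⟩
      · exact hs h1
      · norm_num at h2
    have hxt : (μ (Ioc 0 s)) ^ (1/4:ℝ) ≠ ⊤ :=
      ENNReal.rpow_ne_top_of_nonneg (by norm_num) (hWfin s)
    simp only [Pi.mul_apply, ha, hb]
    rw [mul_assoc, ENNReal.mul_inv_cancel hx0 hxt, mul_one]
  have conj : Real.HolderConjugate 2 2 := Real.HolderConjugate.two_two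
  have holder := ENNReal.lintegral_mul_le_Lp_mul_Lq m conj hameas.aemeasurable hbmeas.aemeasurable
  rw [← heq] at holder
  have hX : ∫⁻ s, a s ^ (2:ℝ) ∂m = ∫⁻ s in Ioc (0:ℝ) t, f s ^ 2 * esqrt (μ (Ioc 0 s)) ∂μ := by
    refine lintegral_congr fun s => ?_
    rw [ha]
    rw [ENNReal.mul_rpow_of_nonneg _ _ (by norm_num : (0:ℝ) ≤ 2), ← ENNReal.rpow_mul]
    have e1 : f s ^ (2:ℝ) = f s ^ 2 := by
      rw [← ENNReal.rpow_natCast (f s) 2]; norm_num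
    have e2 : (1/4:ℝ) * 2 = 1/2 := by norm_num
    rw [e1, e2]; rfl
  have hY : ∫⁻ s, b s ^ (2:ℝ) ∂m = ∫⁻ s in Ioc (0:ℝ) t, (esqrt (μ (Ioc 0 s)))⁻¹ ∂μ := by
    refine lintegral_congr fun s => ?_
    rw [hb]
    rw [ENNReal.inv_rpow, ← ENNReal.rpow_mul]
    have e2 : (1/4:ℝ) * 2 = 1/2 := by norm_num
    rw [e2]; rfl
  have hKey : ∫⁻ s in Ioc (0:ℝ) t, (esqrt (μ (Ioc 0 s)))⁻¹ ∂μ ≤ 4 * esqrt (μ (Ioc 0 t)) :=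
    key_estimate μ (Ioc 0 t) _ (μ (Ioc 0 t))
      (fun s hs => measure_mono (Ioc_subset_Ioc_right hs.2)) (level_Ioc μ t)
  calc (∫⁻ s in Ioc (0:ℝ) t, f s ∂μ) ^ 2
      = (∫⁻ s in Ioc (0:ℝ) t, f s ∂μ) * (∫⁻ s in Ioc (0:ℝ) t, f s ∂μ) := sq _
    _ ≤ ((∫⁻ s, a s ^ (2:ℝ) ∂m) ^ (1/(2:ℝ)) * (∫⁻ s, b s ^ (2:ℝ) ∂m) ^ (1/(2:ℝ)))
        * ((∫⁻ s, a s ^ (2:ℝ) ∂m) ^ (1/(2:ℝ)) * (∫⁻ s, b s ^ (2:ℝ) ∂m) ^ (1/(2:ℝ))) :=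
          mul_le_mul' holder holder
    _ = (∫⁻ s, a s ^ (2:ℝ) ∂m) * (∫⁻ s, b s ^ (2:ℝ) ∂m) := by
        rw [mul_mul_mul_comm, rpow_half_mul_self, rpow_half_mul_self]
    _ ≤ (∫⁻ s in Ioc (0:ℝ) t, f s ^ 2 * esqrt (μ (Ioc 0 s)) ∂μ) * (4 * esqrt (μ (Ioc 0 t))) := by
        rw [hX, hY]
        exact mul_le_mul_right hKey _

/-- Muckenhoupt's two-weight Hardy inequality on `(0,∞)`. -/
theorem two_weight_hardy :
    ∃ C : ℝ≥0∞, C ≠ ⊤ ∧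
      ∀ (μ ν : Measure ℝ), IsLocallyFiniteMeasure μ → IsLocallyFiniteMeasure ν →
        ∀ A : ℝ≥0∞, (∀ r : ℝ, 0 < r → ν (Ici r) * μ (Ioc 0 r) ≤ A) →
          ∀ f : ℝ → ℝ≥0∞, Measurable f →
            ∫⁻ t in Ioi (0 : ℝ), (∫⁻ s in Ioc (0 : ℝ) t, f s ∂μ) ^ 2 ∂ν ≤
              C * A * ∫⁻ s in Ioi (0 : ℝ), (f s) ^ 2 ∂μ := by
  refine ⟨16, by norm_num, ?_⟩
  intro μ ν hμ hν A hA f hf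
  haveI := hμ; haveI := hν
  by_cases hAtop : A = ⊤
  · subst hAtop
    by_cases hI : ∫⁻ s in Ioi (0:ℝ), f s ^ 2 ∂μ = 0
    · have hf0 : ∀ᵐ s ∂(μ.restrict (Ioi (0:ℝ))), f s = 0 := by
        have h2 := (lintegral_eq_zero_iff (hf.pow_const 2)).mp hI
        filter_upwards [h2] with s hs
        exact (pow_eq_zero_iff (by norm_num : (2:ℕ) ≠ 0)).mp hs
      have hFt : ∀ t : ℝ, ∫⁻ s in Ioc (0:ℝ) t, f s ∂μ = 0 := by
        intro t
        have hsub : μ.restrict (Ioc (0:ℝ) t) ≤ μ.restrict (Ioi (0:ℝ)) :=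
          Measure.restrict_mono Ioc_subset_Ioi_self le_rfl
        have hz : ∀ᵐ s ∂(μ.restrict (Ioc (0:ℝ) t)), f s = 0 := (ae_mono hsub) hf0
        calc ∫⁻ s in Ioc (0:ℝ) t, f s ∂μ
            = ∫⁻ _ in Ioc (0:ℝ) t, 0 ∂μ := lintegral_congr_ae hz
          _ = 0 := lintegral_zero
      simp only [hFt]
      simp
    · refine le_trans le_top (le_of_eq ?_)
      rw [ENNReal.mul_top (by norm_num : (16:ℝ≥0∞) ≠ 0), ENNReal.top_mul hI]
  · -- Main case : A ≠ ⊤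
    have hWfin : ∀ s:ℝ, μ (Ioc 0 s) ≠ ⊤ := fun s =>
      ((measure_mono Ioc_subset_Icc_self).trans_lt isCompact_Icc.measure_lt_top).ne
    have hWmono : Monotone (fun s:ℝ => μ (Ioc 0 s)) := fun x y hxy =>
      measure_mono (Ioc_subset_Ioc_right hxy)
    have hWmeas : Measurable (fun s:ℝ => μ (Ioc 0 s)) := hWmono.measurable
    have hVanti : Antitone (fun t:ℝ => ν (Ici t)) := fun x y hxy =>
      measure_mono (Ici_subset_Ici.mpr hxy)
    have hVmeas : Measurable (fun t:ℝ => ν (Ici t)) := hVanti.measurable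
    have hφmeas : Measurable (fun s => f s ^ 2 * esqrt (μ (Ioc 0 s))) :=
      (hf.pow_const 2).mul (measurable_esqrt.comp hWmeas)
    have hcmeas : Measurable (fun t:ℝ => (esqrt (ν (Ici t)))⁻¹) :=
      (measurable_esqrt.comp hVmeas).inv
    -- a.e. positivity of the weights
    have hWnull : μ ({s | μ (Ioc 0 s) = 0} ∩ Ioi 0) = 0 := by
      have hsub : ({s | μ (Ioc 0 s) = 0} ∩ Ioi 0) ⊆
          ⋃ n : ℕ, {s | s ∈ Ioc (0:ℝ) (n+1) ∧ μ (Ioc 0 s) ≤ 0} := by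
        intro x hx
        obtain ⟨n, hn⟩ := exists_nat_gt x
        exact mem_iUnion.mpr ⟨n, ⟨hx.2, by linarith⟩, le_of_eq hx.1⟩
      refine le_antisymm (le_trans (measure_mono hsub) ?_) (zero_le)
      refine (measure_iUnion_le _).trans ?_
      have hz : ∀ n:ℕ, μ {s | s ∈ Ioc (0:ℝ) (n+1) ∧ μ (Ioc 0 s) ≤ 0} = 0 := fun n =>
        le_antisymm (level_Ioc μ _ 0) (zero_le)
      simp only [hz, tsum_zero, le_refl]
    have hVnull : ν ({t | ν (Ici t) = 0} ∩ Ioi 0) = 0 := by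
      have hsub : ({t | ν (Ici t) = 0} ∩ Ioi 0) ⊆ {t | t ∈ Ioi (0:ℝ) ∧ ν (Ici t) ≤ 0} :=
        fun x hx => ⟨hx.2, le_of_eq hx.1⟩
      exact le_antisymm ((measure_mono hsub).trans (level_Ici ν (Ioi 0) bddBelow_Ioi 0))
        (zero_le)
    have hVae : ∀ᵐ t ∂(ν.restrict (Ioi (0:ℝ))), ν (Ici t) ≠ 0 := by
      rw [ae_iff]
      have hre : (ν.restrict (Ioi (0:ℝ))) {t | ¬ ν (Ici t) ≠ 0} =
          ν ({t | ν (Ici t) = 0} ∩ Ioi 0) := by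
        rw [Measure.restrict_apply (by
          have : {t : ℝ | ¬ ν (Ici t) ≠ 0} = (fun t:ℝ => ν (Ici t)) ⁻¹' {0} := by
            ext x; simp
          rw [this]; exact hVmeas (measurableSet_singleton 0))]
        congr 1
        ext x; simp
      rw [hre]; exact hVnull
    have hWae : ∀ᵐ s ∂(μ.restrict (Ioi (0:ℝ))), μ (Ioc 0 s) ≠ 0 := by
      rw [ae_iff]
      have hre : (μ.restrict (Ioi (0:ℝ))) {s | ¬ μ (Ioc 0 s) ≠ 0} =
          μ ({s | μ (Ioc 0 s) = 0} ∩ Ioi 0) := by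
        rw [Measure.restrict_apply (by
          have : {s : ℝ | ¬ μ (Ioc 0 s) ≠ 0} = (fun s:ℝ => μ (Ioc 0 s)) ⁻¹' {0} := by
            ext x; simp
          rw [this]; exact hWmeas (measurableSet_singleton 0))]
        congr 1
        ext x; simp
      rw [hre]; exact hWnull
    -- Step 1-2
    have hstep12 : ∫⁻ t in Ioi (0:ℝ), (∫⁻ s in Ioc (0:ℝ) t, f s ∂μ) ^ 2 ∂ν ≤
        ∫⁻ t in Ioi (0:ℝ), (4 * esqrt A) * ((esqrt (ν (Ici t)))⁻¹
          * (∫⁻ s in Ioc (0:ℝ) t, f s ^ 2 * esqrt (μ (Ioc 0 s)) ∂μ)) ∂ν := by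
      refine lintegral_mono_ae ?_
      filter_upwards [ae_restrict_mem measurableSet_Ioi, hVae] with t ht hvt
      refine (CS_step μ f hf t).trans ?_
      have hle : μ (Ioc 0 t) ≤ A / ν (Ici t) := by
        rw [ENNReal.le_div_iff_mul_le (Or.inl hvt) (Or.inr hAtop), mul_comm]
        exact hA t ht
      have h2 : esqrt (μ (Ioc 0 t)) ≤ esqrt A * (esqrt (ν (Ici t)))⁻¹ := by
        refine (esqrt_mono hle).trans_eq ?_
        rw [esqrt_div, div_eq_mul_inv]
      calc (∫⁻ s in Ioc (0:ℝ) t, f s ^ 2 * esqrt (μ (Ioc 0 s)) ∂μ) * (4 * esqrt (μ (Ioc 0 t)))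
          ≤ (∫⁻ s in Ioc (0:ℝ) t, f s ^ 2 * esqrt (μ (Ioc 0 s)) ∂μ)
            * (4 * (esqrt A * (esqrt (ν (Ici t)))⁻¹)) :=
            mul_le_mul_right (mul_le_mul_right h2 4) _
        _ = (4 * esqrt A) * ((esqrt (ν (Ici t)))⁻¹
            * (∫⁻ s in Ioc (0:ℝ) t, f s ^ 2 * esqrt (μ (Ioc 0 s)) ∂μ)) := by ring
    -- Step 3 : pull out the constant
    have hconst : ∫⁻ t in Ioi (0:ℝ), (4 * esqrt A) * ((esqrt (ν (Ici t)))⁻¹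
          * (∫⁻ s in Ioc (0:ℝ) t, f s ^ 2 * esqrt (μ (Ioc 0 s)) ∂μ)) ∂ν
        = (4 * esqrt A) * ∫⁻ t in Ioi (0:ℝ), (esqrt (ν (Ici t)))⁻¹
          * (∫⁻ s in Ioc (0:ℝ) t, f s ^ 2 * esqrt (μ (Ioc 0 s)) ∂μ) ∂ν :=
      lintegral_const_mul' _ _ (ENNReal.mul_ne_top (by norm_num) (esqrt_ne_top hAtop))
    -- Step 4 : Tonelli
    have hkmeas : Measurable (fun p : ℝ × ℝ => if p.2 ≤ p.1 then
        (f p.2 ^ 2 * esqrt (μ (Ioc 0 p.2))) * (esqrt (ν (Ici p.1)))⁻¹ else 0) :=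
      Measurable.ite (measurableSet_le measurable_snd measurable_fst)
        ((hφmeas.comp measurable_snd).mul (hcmeas.comp measurable_fst)) measurable_const
    have hswap := lintegral_lintegral_swap (μ := ν.restrict (Ioi (0:ℝ)))
      (ν := μ.restrict (Ioi (0:ℝ)))
      (f := fun t s => if s ≤ t then (f s ^ 2 * esqrt (μ (Ioc 0 s))) * (esqrt (ν (Ici t)))⁻¹ else 0)
      hkmeas.aemeasurable
    have hL : ∀ t : ℝ, ∫⁻ s in Ioi (0:ℝ),
        (if s ≤ t then (f s ^ 2 * esqrt (μ (Ioc 0 s))) * (esqrt (ν (Ici t)))⁻¹ else 0) ∂μ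
        = (esqrt (ν (Ici t)))⁻¹ * ∫⁻ s in Ioc (0:ℝ) t, f s ^ 2 * esqrt (μ (Ioc 0 s)) ∂μ := by
      intro t
      have hind : (fun s => if s ≤ t then (f s ^ 2 * esqrt (μ (Ioc 0 s)))
          * (esqrt (ν (Ici t)))⁻¹ else 0)
          = (Iic t).indicator (fun s => (f s ^ 2 * esqrt (μ (Ioc 0 s)))
            * (esqrt (ν (Ici t)))⁻¹) := by
        funext s; simp [Set.indicator_apply]
      rw [hind, lintegral_indicator measurableSet_Iic, Measure.restrict_restrict measurableSet_Iic]
      have hinter : Iic t ∩ Ioi (0:ℝ) = Ioc 0 t := by rw [inter_comm]; exact Ioi_inter_Iic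
      rw [hinter, lintegral_mul_const _ hφmeas, mul_comm]
    have hR : ∀ᵐ s ∂(μ.restrict (Ioi (0:ℝ))), (∫⁻ t in Ioi (0:ℝ),
        (if s ≤ t then (f s ^ 2 * esqrt (μ (Ioc 0 s))) * (esqrt (ν (Ici t)))⁻¹ else 0) ∂ν)
        = (f s ^ 2 * esqrt (μ (Ioc 0 s))) * ∫⁻ t in Ici s, (esqrt (ν (Ici t)))⁻¹ ∂ν := by
      filter_upwards [ae_restrict_mem measurableSet_Ioi] with s hs
      have hind : (fun u => if s ≤ u then (f s ^ 2 * esqrt (μ (Ioc 0 s)))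
          * (esqrt (ν (Ici u)))⁻¹ else 0)
          = (Ici s).indicator (fun u => (f s ^ 2 * esqrt (μ (Ioc 0 s)))
            * (esqrt (ν (Ici u)))⁻¹) := by
        funext u; simp [Set.indicator_apply, mem_Ici]
      rw [hind, lintegral_indicator measurableSet_Ici, Measure.restrict_restrict measurableSet_Ici]
      have hinter : Ici s ∩ Ioi (0:ℝ) = Ici s :=
        inter_eq_left.mpr (fun x hx => show (0:ℝ) < x from lt_of_lt_of_le hs hx)
      rw [hinter, lintegral_const_mul _ hcmeas]
    have hTon : ∫⁻ t in Ioi (0:ℝ), (esqrt (ν (Ici t)))⁻¹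
          * (∫⁻ s in Ioc (0:ℝ) t, f s ^ 2 * esqrt (μ (Ioc 0 s)) ∂μ) ∂ν
        = ∫⁻ s in Ioi (0:ℝ), (f s ^ 2 * esqrt (μ (Ioc 0 s)))
          * (∫⁻ t in Ici s, (esqrt (ν (Ici t)))⁻¹ ∂ν) ∂μ := by
      calc ∫⁻ t in Ioi (0:ℝ), (esqrt (ν (Ici t)))⁻¹
            * (∫⁻ s in Ioc (0:ℝ) t, f s ^ 2 * esqrt (μ (Ioc 0 s)) ∂μ) ∂ν
          = ∫⁻ t in Ioi (0:ℝ), ∫⁻ s in Ioi (0:ℝ),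
            (if s ≤ t then (f s ^ 2 * esqrt (μ (Ioc 0 s))) * (esqrt (ν (Ici t)))⁻¹ else 0) ∂μ ∂ν :=
            lintegral_congr fun t => (hL t).symm
        _ = ∫⁻ s in Ioi (0:ℝ), ∫⁻ t in Ioi (0:ℝ),
            (if s ≤ t then (f s ^ 2 * esqrt (μ (Ioc 0 s))) * (esqrt (ν (Ici t)))⁻¹ else 0) ∂ν ∂μ :=
            hswap
        _ = ∫⁻ s in Ioi (0:ℝ), (f s ^ 2 * esqrt (μ (Ioc 0 s)))
            * (∫⁻ t in Ici s, (esqrt (ν (Ici t)))⁻¹ ∂ν) ∂μ := lintegral_congr_ae hR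
    -- Step 5
    have hstep5 : ∫⁻ s in Ioi (0:ℝ), (f s ^ 2 * esqrt (μ (Ioc 0 s)))
          * (∫⁻ t in Ici s, (esqrt (ν (Ici t)))⁻¹ ∂ν) ∂μ
        ≤ (4 * esqrt A) * ∫⁻ s in Ioi (0:ℝ), f s ^ 2 ∂μ := by
      have hmono : ∫⁻ s in Ioi (0:ℝ), (f s ^ 2 * esqrt (μ (Ioc 0 s)))
            * (∫⁻ t in Ici s, (esqrt (ν (Ici t)))⁻¹ ∂ν) ∂μ
          ≤ ∫⁻ s in Ioi (0:ℝ), (4 * esqrt A) * (f s ^ 2) ∂μ := by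
        refine lintegral_mono_ae ?_
        filter_upwards [ae_restrict_mem measurableSet_Ioi, hWae] with s hs hws
        have hRle : (∫⁻ t in Ici s, (esqrt (ν (Ici t)))⁻¹ ∂ν) ≤ 4 * esqrt (ν (Ici s)) :=
          key_estimate ν (Ici s) _ (ν (Ici s))
            (fun u hu => measure_mono (Ici_subset_Ici.mpr hu)) (level_Ici ν (Ici s) bddBelow_Ici)
        have hVle : esqrt (ν (Ici s)) ≤ esqrt A * (esqrt (μ (Ioc 0 s)))⁻¹ := by
          have hvw : ν (Ici s) ≤ A / μ (Ioc 0 s) := by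
            rw [ENNReal.le_div_iff_mul_le (Or.inl hws) (Or.inr hAtop)]
            exact hA s hs
          exact (esqrt_mono hvw).trans_eq (by rw [esqrt_div, div_eq_mul_inv])
        calc (f s ^ 2 * esqrt (μ (Ioc 0 s))) * (∫⁻ t in Ici s, (esqrt (ν (Ici t)))⁻¹ ∂ν)
            ≤ (f s ^ 2 * esqrt (μ (Ioc 0 s))) * (4 * (esqrt A * (esqrt (μ (Ioc 0 s)))⁻¹)) :=
              mul_le_mul_right (hRle.trans (mul_le_mul_right hVle 4)) _
          _ = (4 * esqrt A) * (f s ^ 2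
              * (esqrt (μ (Ioc 0 s)) * (esqrt (μ (Ioc 0 s)))⁻¹)) := by ring
          _ = (4 * esqrt A) * (f s ^ 2) := by
              rw [ENNReal.mul_inv_cancel (esqrt_ne_zero hws) (esqrt_ne_top (hWfin s)), mul_one]
      refine hmono.trans (le_of_eq ?_)
      exact lintegral_const_mul' _ _ (ENNReal.mul_ne_top (by norm_num) (esqrt_ne_top hAtop))
    -- Combine everything
    calc ∫⁻ t in Ioi (0:ℝ), (∫⁻ s in Ioc (0:ℝ) t, f s ∂μ) ^ 2 ∂ν
        ≤ ∫⁻ t in Ioi (0:ℝ), (4 * esqrt A) * ((esqrt (ν (Ici t)))⁻¹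
          * (∫⁻ s in Ioc (0:ℝ) t, f s ^ 2 * esqrt (μ (Ioc 0 s)) ∂μ)) ∂ν := hstep12
      _ = (4 * esqrt A) * ∫⁻ t in Ioi (0:ℝ), (esqrt (ν (Ici t)))⁻¹
          * (∫⁻ s in Ioc (0:ℝ) t, f s ^ 2 * esqrt (μ (Ioc 0 s)) ∂μ) ∂ν := hconst
      _ = (4 * esqrt A) * ∫⁻ s in Ioi (0:ℝ), (f s ^ 2 * esqrt (μ (Ioc 0 s)))
          * (∫⁻ t in Ici s, (esqrt (ν (Ici t)))⁻¹ ∂ν) ∂μ := by rw [hTon]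
      _ ≤ (4 * esqrt A) * ((4 * esqrt A) * ∫⁻ s in Ioi (0:ℝ), f s ^ 2 ∂μ) :=
          mul_le_mul_right hstep5 _
      _ = 16 * A * ∫⁻ s in Ioi (0:ℝ), f s ^ 2 ∂μ := by
          rw [← mul_assoc]
          congr 1
          rw [mul_mul_mul_comm, esqrt_mul_self]
          norm_num
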